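/- Let n ≥ 3. The monoid 2PT_{n−1} := PT({1,...,n−1})ζ ∪ PT({1,...,n−1}), where ζ extends a partial map by fixing 0, is a submonoid of PT({0,1,...,n−1}) of cardinality 2·n^{n−1}, and both PT({1,...,n−1})ζ and PT({1,...,n−1}) (viewed inside PT({0,...,n−1})) are contained in the monoid of partial strong endomorphisms of the star graph S_n. -/

import Mathlib

variable {V : Type*}

/-- Partial transformations of `V`. -/
abbrev PTrans (V : Type*) := V → Option V

/-- Monoid of partial transformations under (left-to-right) composition. -/
instance : Monoid (PTrans V) where
  mul f g := fun v => (f v).bind g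
  one := fun v => some v
  mul_assoc f g h := by
    funext v
    show ((f v).bind g).bind h = (f v).bind (fun x => (g x).bind h)
    cases f v <;> simp
  one_mul f := by funext v; rfl
  mul_one f := by
    funext v
    show (f v).bind (fun x => some x) = f v
    cases f v <;> simp

/-- Domain of a partial transformation. -/
def pdom (α : PTrans V) : Set V := {u | α u ≠ none}

/-- Image of a partial transformation. -/
def pim (α : PTrans V) : Set V := {v | ∃ u, α u = some v}

def IsPEnd (G : SimpleGraph V) (α : PTrans V) : Prop :=
  ∀ u v u' v', α u = some u' → α v = some v' → G.Adj u v → G.Adj u' v'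

def IsPwEnd (G : SimpleGraph V) (α : PTrans V) : Prop :=
  ∀ u v u' v', α u = some u' → α v = some v' → G.Adj u v → u' ≠ v' → G.Adj u' v'

def IsPsEnd (G : SimpleGraph V) (α : PTrans V) : Prop :=
  ∀ u v u' v', α u = some u' → α v = some v' → (G.Adj u v ↔ G.Adj u' v')

def IsPswEnd (G : SimpleGraph V) (α : PTrans V) : Prop :=
  ∀ u v u' v', α u = some u' → α v = some v' → ((G.Adj u v ∧ u' ≠ v') ↔ G.Adj u' v')

/-- Injectivity of a partial transformation. -/
def PInjective (α : PTrans V) : Prop :=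
  ∀ u v w, α u = some w → α v = some w → u = v

open Classical in
/-- The inverse of a partial (injective) transformation. -/
noncomputable def pinv (α : PTrans V) : PTrans V :=
  fun v => if h : ∃ u, α u = some v then some h.choose else none

/-- Partial automorphism: injective, and both it and its inverse are
partial endomorphisms. -/
def IsPAut (G : SimpleGraph V) (α : PTrans V) : Prop :=
  PInjective α ∧ IsPEnd G α ∧ IsPEnd G (pinv α)

/-- The star graph on vertices `{0,1,...,n-1}` with center `0`. -/
def starGraph (n : ℕ) : SimpleGraph (Fin n) :=
  SimpleGraph.fromRel (fun u _ => (u : ℕ) = 0)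

section StarAux

variable {n : ℕ}

lemma pmul_apply (α β : PTrans (Fin n)) (v : Fin n) : (α * β) v = (α v).bind β := rfl

lemma pone_apply (v : Fin n) : (1 : PTrans (Fin n)) v = some v := rfl

/-- The "zeta" set: maps fixing `z` and sending non-`z` into non-`z`. -/
def Aset (n : ℕ) (z : Fin n) : Set (PTrans (Fin n)) :=
  {α | α z = some z ∧ ∀ i : Fin n, i ≠ z → ∀ j, α i = some j → j ≠ z}

def Bset (n : ℕ) (z : Fin n) : Set (PTrans (Fin n)) :=
  {α | α z = none ∧ ∀ i j : Fin n, α i = some j → j ≠ z}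

lemma submonoid_aux (n : ℕ) (z : Fin n) :
    ∃ S : Submonoid (PTrans (Fin n)), (S : Set (PTrans (Fin n))) = Aset n z ∪ Bset n z := by
  refine ⟨⟨⟨Aset n z ∪ Bset n z, ?_⟩, ?_⟩, rfl⟩
  · rintro α β (⟨h1, h2⟩ | ⟨h1, h2⟩) (⟨g1, g2⟩ | ⟨g1, g2⟩)
    · left
      refine ⟨by rw [pmul_apply, h1]; exact g1, ?_⟩
      intro i hi j hj
      rw [pmul_apply] at hj
      rcases hk : α i with _ | k
      · rw [hk] at hj; simp at hj
      · rw [hk] at hj; replace hj : β k = some j := hj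
        have hkz : k ≠ z := h2 i hi k hk
        exact g2 k hkz j hj
    · right
      refine ⟨by rw [pmul_apply, h1]; exact g1, ?_⟩
      intro i j hj
      rw [pmul_apply] at hj
      rcases hk : α i with _ | k
      · rw [hk] at hj; simp at hj
      · rw [hk] at hj; replace hj : β k = some j := hj
        exact g2 k j hj
    · right
      refine ⟨by rw [pmul_apply, h1]; rfl, ?_⟩
      intro i j hj
      rw [pmul_apply] at hj
      rcases hk : α i with _ | k
      · rw [hk] at hj; simp at hj
      · rw [hk] at hj; replace hj : β k = some j := hj
        exact g2 k (h2 i k hk) j hj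
    · right
      refine ⟨by rw [pmul_apply, h1]; rfl, ?_⟩
      intro i j hj
      rw [pmul_apply] at hj
      rcases hk : α i with _ | k
      · rw [hk] at hj; simp at hj
      · rw [hk] at hj; replace hj : β k = some j := hj
        exact g2 k j hj
  · left
    exact ⟨rfl, fun i hi j hj => by rw [pone_apply] at hj; cases hj; exact hi⟩

noncomputable instance : Fintype (PTrans (Fin n)) := by
  unfold PTrans; infer_instance

def TargetT (n : ℕ) (z : Fin n) := {i : Fin n // i ≠ z} → {o : Option (Fin n) // o ≠ some z}

noncomputable instance (n : ℕ) (z : Fin n) : Fintype (TargetT n z) := by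
  classical
  unfold TargetT; infer_instance

lemma card_targetT (n : ℕ) (hn : 1 ≤ n) (z : Fin n) : Nat.card (TargetT n z) = n ^ (n - 1) := by
  classical
  rw [Nat.card_eq_fintype_card]
  unfold TargetT
  rw [Fintype.card_fun]
  have h1 : Fintype.card {o : Option (Fin n) // o ≠ some z} = n := by
    have := Fintype.card_subtype_compl (fun o : Option (Fin n) => o = some z)
    simp only [Fintype.card_subtype_eq, Fintype.card_option, Fintype.card_fin] at this
    convert this using 2
    omega
  have h2 : Fintype.card {i : Fin n // i ≠ z} = n - 1 := by
    have := Fintype.card_subtype_compl (fun i : Fin n => i = z)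
    simp only [Fintype.card_subtype_eq, Fintype.card_fin] at this
    convert this using 2
  rw [h1, h2]

noncomputable def AsetEquiv (n : ℕ) (z : Fin n) : Aset n z ≃ TargetT n z where
  toFun α i := ⟨α.1 i.1, fun h => α.2.2 i.1 i.2 z h rfl⟩
  invFun f := ⟨fun i => if h : i = z then some z else (f ⟨i, h⟩).1, by
    refine ⟨by simp, ?_⟩
    intro i hi j hj
    simp only [dif_neg hi] at hj
    intro hjz
    exact (f ⟨i, hi⟩).2 (by rw [hj, hjz])⟩
  left_inv α := by
    apply Subtype.ext
    funext i
    by_cases h : i = z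
    · subst h; simp only [dif_pos]; exact α.2.1.symm
    · simp only [dif_neg h]
  right_inv f := by
    funext i
    apply Subtype.ext
    simp only [dif_neg i.2]

noncomputable def BsetEquiv (n : ℕ) (z : Fin n) : Bset n z ≃ TargetT n z where
  toFun α i := ⟨α.1 i.1, fun h => α.2.2 i.1 z h rfl⟩
  invFun f := ⟨fun i => if h : i = z then none else (f ⟨i, h⟩).1, by
    refine ⟨by simp, ?_⟩
    intro i j hj
    by_cases h : i = z
    · simp only [dif_pos h] at hj; cases hj
    · simp only [dif_neg h] at hj
      intro hjz
      exact (f ⟨i, h⟩).2 (by rw [hj, hjz])⟩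
  left_inv α := by
    apply Subtype.ext
    funext i
    by_cases h : i = z
    · subst h; simp only [dif_pos]; exact α.2.1.symm
    · simp only [dif_neg h]
  right_inv f := by
    funext i
    apply Subtype.ext
    simp only [dif_neg i.2]

lemma card_aux (n : ℕ) (hn : 1 ≤ n) (z : Fin n) :
    Set.ncard (Aset n z ∪ Bset n z) = 2 * n ^ (n - 1) := by
  have hdisj : Disjoint (Aset n z) (Bset n z) := by
    rw [Set.disjoint_left]
    rintro α ⟨h1, _⟩ ⟨h2, _⟩
    rw [h1] at h2; cases h2
  rw [Set.ncard_union_eq hdisj (Set.toFinite _) (Set.toFinite _)]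
  have hA : (Aset n z).ncard = n ^ (n - 1) := by
    rw [← Nat.card_coe_set_eq, Nat.card_congr (AsetEquiv n z), card_targetT n hn z]
  have hB : (Bset n z).ncard = n ^ (n - 1) := by
    rw [← Nat.card_coe_set_eq, Nat.card_congr (BsetEquiv n z), card_targetT n hn z]
  rw [hA, hB]; ring

lemma star_adj {u v : Fin n} : (starGraph n).Adj u v ↔ u ≠ v ∧ ((u : ℕ) = 0 ∨ (v : ℕ) = 0) := by
  simp [starGraph, SimpleGraph.fromRel_adj]

lemma psEnd_A (n : ℕ) (z : Fin n) (hz : (z : ℕ) = 0) :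
    Aset n z ⊆ {α | IsPsEnd (starGraph n) α} := by
  rintro α ⟨h1, h2⟩
  intro u v u' v' hu hv
  have key : ∀ w w' : Fin n, α w = some w' → ((w : ℕ) = 0 ↔ (w' : ℕ) = 0) := by
    intro w w' hw
    constructor
    · intro h
      have : w = z := Fin.ext (by rw [h, hz])
      rw [this, h1] at hw
      cases hw; exact hz
    · intro h
      by_contra hne
      have hwz : w ≠ z := fun e => hne (by rw [e, hz])
      exact h2 w hwz w' hw (Fin.ext (by rw [h, hz]))
  have ku := key u u' hu
  have kv := key v v' hv
  rw [star_adj, star_adj]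
  constructor
  · rintro ⟨hne, h | h⟩
    · have hu0 := ku.1 h
      have hv0 : (v : ℕ) ≠ 0 := fun e => hne (Fin.ext (by rw [h, e]))
      have hv0' : (v' : ℕ) ≠ 0 := fun e => hv0 (kv.2 e)
      exact ⟨fun e => hv0' (by rw [← e, hu0]), Or.inl hu0⟩
    · have hv0 := kv.1 h
      have hu0 : (u : ℕ) ≠ 0 := fun e => hne (Fin.ext (by rw [h, e]))
      have hu0' : (u' : ℕ) ≠ 0 := fun e => hu0 (ku.2 e)
      exact ⟨fun e => hu0' (by rw [e, hv0]), Or.inr hv0⟩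
  · rintro ⟨hne, h | h⟩
    · have hu0 := ku.2 h
      have hv0' : (v' : ℕ) ≠ 0 := fun e => hne (Fin.ext (by rw [h, e]))
      have hv0 : (v : ℕ) ≠ 0 := fun e => hv0' (kv.1 e)
      exact ⟨fun e => hv0 (by rw [← e, hu0]), Or.inl hu0⟩
    · have hv0 := kv.2 h
      have hu0' : (u' : ℕ) ≠ 0 := fun e => hne (Fin.ext (by rw [h, e]))
      have hu0 : (u : ℕ) ≠ 0 := fun e => hu0' (ku.1 e)
      exact ⟨fun e => hu0 (by rw [e, hv0]), Or.inr hv0⟩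

lemma psEnd_B (n : ℕ) (z : Fin n) (hz : (z : ℕ) = 0) :
    Bset n z ⊆ {α | IsPsEnd (starGraph n) α} := by
  rintro α ⟨h1, h2⟩
  intro u v u' v' hu hv
  have hu0 : (u : ℕ) ≠ 0 := by
    intro h
    have : u = z := Fin.ext (by rw [h, hz])
    rw [this, h1] at hu; cases hu
  have hv0 : (v : ℕ) ≠ 0 := by
    intro h
    have : v = z := Fin.ext (by rw [h, hz])
    rw [this, h1] at hv; cases hv
  have hu0' : (u' : ℕ) ≠ 0 := fun h => h2 u u' hu (Fin.ext (by rw [h, hz]))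
  have hv0' : (v' : ℕ) ≠ 0 := fun h => h2 v v' hv (Fin.ext (by rw [h, hz]))
  rw [star_adj, star_adj]
  constructor
  · rintro ⟨_, h | h⟩ <;> [exact absurd h hu0; exact absurd h hv0]
  · rintro ⟨_, h | h⟩ <;> [exact absurd h hu0'; exact absurd h hv0']

end StarAux

theorem stmt19 (n : ℕ) (hn : 3 ≤ n) :
    (∃ S : Submonoid (PTrans (Fin n)),
      (S : Set (PTrans (Fin n))) =
        {α | α ⟨0, by omega⟩ = some ⟨0, by omega⟩ ∧
            ∀ i : Fin n, i ≠ ⟨0, by omega⟩ → ∀ j, α i = some j → j ≠ ⟨0, by omega⟩} ∪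
          {α | α ⟨0, by omega⟩ = none ∧ ∀ i j : Fin n, α i = some j → j ≠ ⟨0, by omega⟩}) ∧
    Set.ncard
        ({α : PTrans (Fin n) | α ⟨0, by omega⟩ = some ⟨0, by omega⟩ ∧
            ∀ i : Fin n, i ≠ ⟨0, by omega⟩ → ∀ j, α i = some j → j ≠ ⟨0, by omega⟩} ∪
          {α : PTrans (Fin n) | α ⟨0, by omega⟩ = none ∧
            ∀ i j : Fin n, α i = some j → j ≠ ⟨0, by omega⟩}) = 2 * n ^ (n - 1) ∧
    {α : PTrans (Fin n) | α ⟨0, by omega⟩ = some ⟨0, by omega⟩ ∧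
        ∀ i : Fin n, i ≠ ⟨0, by omega⟩ → ∀ j, α i = some j → j ≠ ⟨0, by omega⟩} ⊆
      {α | IsPsEnd (starGraph n) α} ∧
    {α : PTrans (Fin n) | α ⟨0, by omega⟩ = none ∧
        ∀ i j : Fin n, α i = some j → j ≠ ⟨0, by omega⟩} ⊆
      {α | IsPsEnd (starGraph n) α} := by
  have h0 : (0 : ℕ) < n := by omega
  have hz : ((⟨0, h0⟩ : Fin n) : ℕ) = 0 := rfl
  exact ⟨submonoid_aux n ⟨0, h0⟩, card_aux n (by omega) ⟨0, h0⟩,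
    psEnd_A n ⟨0, h0⟩ hz, psEnd_B n ⟨0, h0⟩ hz⟩
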